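/- Let γ₁,…,γ_n ∈ ℝ^k (n ≥ 1) be polarized by ξ ∈ ℝ^k, let c ∈ ℝ^k, let ε > 0, and let ψ ∈ 𝒮(ℝ^k). Then ∫_{[0,∞)^n} ψ̂(c + Σ_{j=1}^n s_j γ_j) · Π_{j=1}^n e^{−ε s_j ⟨γ_j, ξ⟩} ds = ∫_{ℝ^k} e^{−i⟨x,c⟩} ψ(x) · Π_{j=1}^n (i⟨γ_j, x⟩ + ε⟨γ_j, ξ⟩)^{−1} dx, where both sides converge absolutely. -/

import Mathlib

open MeasureTheory Set Filter Topology

lemma aux_pi_prod {n : ℕ} {M : Type*} [CommMonoidWithZero M] (g : Fin n → ℝ → M) :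
    (Set.Ici (0 : Fin n → ℝ)).indicator (fun s => ∏ j, g j (s j)) =
      fun s => ∏ j, (Set.Ici (0 : ℝ)).indicator (g j) (s j) := by
  funext s
  show _ = ∏ j, (Set.Ici (0 : ℝ)).indicator (g j) (s j)
  by_cases h : s ∈ Set.Ici (0 : Fin n → ℝ)
  · rw [Set.indicator_of_mem h]
    exact Finset.prod_congr rfl fun j _ =>
      (Set.indicator_of_mem (Set.mem_Ici.mpr ((Set.mem_Ici.mp h) j)) _).symm
  · rw [Set.indicator_of_notMem h]
    obtain ⟨j, hj⟩ : ∃ j, ¬ (0 ≤ s j) := by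
      simpa [Set.mem_Ici, Pi.le_def] using h
    exact (Finset.prod_eq_zero (Finset.mem_univ j) (Set.indicator_of_notMem hj _)).symm

lemma aux_pi_prod_apply {n : ℕ} {M : Type*} [CommMonoidWithZero M] (g : Fin n → ℝ → M)
    (s : Fin n → ℝ) :
    (Set.Ici (0 : Fin n → ℝ)).indicator (fun s => ∏ j, g j (s j)) s =
      ∏ j, (Set.Ici (0 : ℝ)).indicator (g j) (s j) :=
  congrFun (aux_pi_prod g) s

lemma auxPiIntegrable {n : ℕ} (a : Fin n → ℝ) (ha : ∀ j, 0 < a j) :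
    IntegrableOn (fun s : Fin n → ℝ => ∏ j, Real.exp (-(a j * s j)))
      (Set.Ici (0 : Fin n → ℝ)) := by
  refine (integrable_indicator_iff measurableSet_Ici).mp ?_
  have h2 : Integrable (fun s : Fin n → ℝ =>
      ∏ j, (Set.Ici (0:ℝ)).indicator (fun t => Real.exp (-(a j * t))) (s j)) volume := by
    refine Integrable.fintype_prod (f := fun j t => (Set.Ici (0:ℝ)).indicator
      (fun t => Real.exp (-(a j * t))) t) fun j => ?_
    rw [integrable_indicator_iff measurableSet_Ici]
    have : IntegrableOn (fun t : ℝ => Real.exp (-(a j * t))) (Set.Ici 0) := by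
      rw [integrableOn_Ici_iff_integrableOn_Ioi]
      simpa [neg_mul] using exp_neg_integrableOn_Ioi 0 (ha j)
    exact this
  exact h2.congr (Filter.Eventually.of_forall fun s => (aux_pi_prod_apply _ s).symm)

lemma auxI {b : ℂ} (hb : 0 < b.re) :
    IntegrableOn (fun t : ℝ => Complex.exp (-(b * t))) (Set.Ici 0) := by
  rw [integrableOn_Ici_iff_integrableOn_Ioi]
  refine (exp_neg_integrableOn_Ioi 0 hb).mono' ?_ ?_
  · exact (Complex.continuous_exp.comp
      ((continuous_const.mul Complex.continuous_ofReal).neg)).aestronglyMeasurable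
  · filter_upwards with t
    simp [Complex.norm_exp, Complex.mul_re]

lemma auxV {b : ℂ} (hb : 0 < b.re) :
    ∫ t in Set.Ici (0:ℝ), Complex.exp (-(b * t)) = b⁻¹ := by
  have hb0 : b ≠ 0 := fun h => by simp [h] at hb
  rw [MeasureTheory.integral_Ici_eq_integral_Ioi]
  have hderiv : ∀ t ∈ Set.Ici (0:ℝ), HasDerivAt (fun t : ℝ => -b⁻¹ * Complex.exp (-(b*t)))
      (Complex.exp (-(b*t))) t := by
    intro t _
    have h0 : HasDerivAt (fun t : ℝ => (t : ℂ)) 1 t := by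
      exact Complex.ofRealCLM.hasDerivAt (x := t)
    have h1 : HasDerivAt (fun t : ℝ => -(b * (t:ℂ))) (-b) t := by
      have := (h0.const_mul b).neg; rw [mul_one] at this; exact this
    have h2 := (h1.cexp).const_mul (-b⁻¹)
    refine h2.congr_deriv ?_
    rw [mul_comm (Complex.exp _) (-b), ← mul_assoc, neg_mul_neg, inv_mul_cancel₀ hb0, one_mul]
  have htend : Tendsto (fun t : ℝ => -b⁻¹ * Complex.exp (-(b*t))) atTop (𝓝 0) := by
    rw [tendsto_zero_iff_norm_tendsto_zero]
    have h3 : Tendsto (fun t : ℝ => Real.exp (-(b.re * t))) atTop (𝓝 0) := by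
      have h4 : Tendsto (fun t : ℝ => b.re * t) atTop atTop :=
        Tendsto.const_mul_atTop hb tendsto_id
      have := Real.tendsto_exp_neg_atTop_nhds_zero.comp h4
      simpa [Function.comp_def] using this
    have : Tendsto (fun t : ℝ => ‖-b⁻¹‖ * Real.exp (-(b.re * t))) atTop (𝓝 (‖-b⁻¹‖ * 0)) :=
      tendsto_const_nhds.mul h3
    simpa [Complex.norm_exp, Complex.mul_re, norm_mul] using this
  have := integral_Ioi_of_hasDerivAt_of_tendsto' hderiv
    ((auxI hb).mono_set Set.Ioi_subset_Ici_self) htend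
  simp only [mul_zero, Complex.ofReal_zero, neg_zero, Complex.exp_zero, mul_one] at this
  rw [this]
  ring

lemma auxPiInt {n : ℕ} (b : Fin n → ℂ) (hb : ∀ j, 0 < (b j).re) :
    ∫ s in Set.Ici (0 : Fin n → ℝ), ∏ j, Complex.exp (-(b j * s j)) = ∏ j, (b j)⁻¹ := by
  rw [← integral_indicator measurableSet_Ici]
  rw [integral_congr_ae (Filter.Eventually.of_forall fun s =>
    aux_pi_prod_apply (fun j t => Complex.exp (-(b j * t))) s)]
  rw [MeasureTheory.integral_fintype_prod_volume_eq_prod (ι := Fin n)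
    (f := fun j t => (Set.Ici (0:ℝ)).indicator (fun t => Complex.exp (-(b j * t))) t)]
  refine Finset.prod_congr rfl fun j _ => ?_
  rw [integral_indicator measurableSet_Ici]
  exact auxV (hb j)

open MeasureTheory Set
open scoped RealInnerProductSpace

theorem stmt_7 (k n : ℕ) (hn : 1 ≤ n)
    (γ : Fin n → EuclideanSpace ℝ (Fin k)) (ξ : EuclideanSpace ℝ (Fin k))
    (hpol : ∀ j, 0 < ⟪γ j, ξ⟫) (c : EuclideanSpace ℝ (Fin k))
    (ε : ℝ) (hε : 0 < ε)
    (ψ : SchwartzMap (EuclideanSpace ℝ (Fin k)) ℂ) :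
    IntegrableOn
      (fun s : Fin n → ℝ =>
        (∫ x : EuclideanSpace ℝ (Fin k),
            Complex.exp (-Complex.I * (⟪x, c + ∑ j, s j • γ j⟫ : ℂ)) * ψ x) *
          ∏ j, Complex.exp (-(((ε * s j * ⟪γ j, ξ⟫) : ℝ) : ℂ)))
      (Set.Ici (0 : Fin n → ℝ)) volume ∧
    Integrable
      (fun x : EuclideanSpace ℝ (Fin k) =>
        Complex.exp (-Complex.I * (⟪x, c⟫ : ℂ)) * ψ x *
          ∏ j, (Complex.I * (⟪γ j, x⟫ : ℂ) + ((ε * ⟪γ j, ξ⟫ : ℝ) : ℂ))⁻¹)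
      volume ∧
    ∫ s in Set.Ici (0 : Fin n → ℝ),
        (∫ x : EuclideanSpace ℝ (Fin k),
            Complex.exp (-Complex.I * (⟪x, c + ∑ j, s j • γ j⟫ : ℂ)) * ψ x) *
          ∏ j, Complex.exp (-(((ε * s j * ⟪γ j, ξ⟫) : ℝ) : ℂ)) =
      ∫ x : EuclideanSpace ℝ (Fin k),
        Complex.exp (-Complex.I * (⟪x, c⟫ : ℂ)) * ψ x *
          ∏ j, (Complex.I * (⟪γ j, x⟫ : ℂ) + ((ε * ⟪γ j, ξ⟫ : ℝ) : ℂ))⁻¹ := by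
  have ha : ∀ j, 0 < ε * ⟪γ j, ξ⟫ := fun j => mul_pos hε (hpol j)
  -- the complex rates
  let b : EuclideanSpace ℝ (Fin k) → Fin n → ℂ :=
    fun x j => Complex.I * (⟪γ j, x⟫ : ℂ) + ((ε * ⟪γ j, ξ⟫ : ℝ) : ℂ)
  have hbre : ∀ x j, (b x j).re = ε * ⟪γ j, ξ⟫ := by
    intro x j
    simp [b, Complex.add_re, Complex.mul_re]
  -- the combined integrand
  let F : (Fin n → ℝ) × EuclideanSpace ℝ (Fin k) → ℂ :=
    fun p => Complex.exp (-Complex.I * (⟪p.2, c⟫ : ℂ)) * ψ p.2 *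
      ∏ j, Complex.exp (-(b p.2 j * p.1 j))
  -- pointwise identity
  have key1 : ∀ (s : Fin n → ℝ) (x : EuclideanSpace ℝ (Fin k)),
      Complex.exp (-Complex.I * (⟪x, c + ∑ j, s j • γ j⟫ : ℂ)) * ψ x *
        ∏ j, Complex.exp (-(((ε * s j * ⟪γ j, ξ⟫) : ℝ) : ℂ)) = F (s, x) := by
    intro s x
    have hinner : ⟪x, c + ∑ j, s j • γ j⟫ = ⟪x, c⟫ + ∑ j, s j * ⟪γ j, x⟫ := by
      rw [inner_add_right, inner_sum]
      congr 1
      refine Finset.sum_congr rfl fun j _ => ?_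
      rw [real_inner_smul_right, real_inner_comm]
    have e1 : Complex.exp (-Complex.I * (⟪x, c + ∑ j, s j • γ j⟫ : ℂ)) =
        Complex.exp (-Complex.I * (⟪x, c⟫ : ℂ)) *
          ∏ j, Complex.exp (-(Complex.I * ((s j * ⟪γ j, x⟫ : ℝ) : ℂ))) := by
      rw [← Complex.exp_sum, ← Complex.exp_add]
      congr 1
      rw [hinner]
      push_cast
      rw [neg_mul, mul_add, neg_add, Finset.mul_sum, ← Finset.sum_neg_distrib]
      congr 1
      all_goals first
        | ring
        | exact Finset.sum_congr rfl fun j _ => by ring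
    have e2 : ∀ j, Complex.exp (-(Complex.I * ((s j * ⟪γ j, x⟫ : ℝ) : ℂ))) *
        Complex.exp (-(((ε * s j * ⟪γ j, ξ⟫) : ℝ) : ℂ)) =
        Complex.exp (-(b x j * s j)) := by
      intro j
      rw [← Complex.exp_add]
      congr 1
      simp only [b]
      push_cast
      ring
    calc Complex.exp (-Complex.I * (⟪x, c + ∑ j, s j • γ j⟫ : ℂ)) * ψ x *
          ∏ j, Complex.exp (-(((ε * s j * ⟪γ j, ξ⟫) : ℝ) : ℂ))
        = Complex.exp (-Complex.I * (⟪x, c⟫ : ℂ)) * ψ x *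
          ((∏ j, Complex.exp (-(Complex.I * ((s j * ⟪γ j, x⟫ : ℝ) : ℂ)))) *
            ∏ j, Complex.exp (-(((ε * s j * ⟪γ j, ξ⟫) : ℝ) : ℂ))) := by
          rw [e1]; ring
      _ = Complex.exp (-Complex.I * (⟪x, c⟫ : ℂ)) * ψ x *
          ∏ j, (Complex.exp (-(Complex.I * ((s j * ⟪γ j, x⟫ : ℝ) : ℂ))) *
            Complex.exp (-(((ε * s j * ⟪γ j, ξ⟫) : ℝ) : ℂ))) := by
          rw [← Finset.prod_mul_distrib]
      _ = F (s, x) := by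
          rw [Finset.prod_congr rfl fun j _ => e2 j]
  -- integrability of F on the product measure
  have hF : Integrable F ((volume.restrict (Set.Ici (0 : Fin n → ℝ))).prod volume) := by
    have hcont : Continuous F := by
      apply Continuous.mul
      apply Continuous.mul
      · exact Complex.continuous_exp.comp (continuous_const.mul
          (Complex.continuous_ofReal.comp (continuous_snd.inner continuous_const)))
      · exact ψ.continuous.comp continuous_snd
      · refine continuous_finset_prod _ fun j _ => ?_
        refine Complex.continuous_exp.comp (Continuous.neg (Continuous.mul ?_ ?_))
        · exact ((continuous_const.mul (Complex.continuous_ofReal.comp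
            (continuous_const.inner continuous_snd))).add continuous_const)
        · exact Complex.continuous_ofReal.comp ((continuous_apply j).comp continuous_fst)
      done
    have hf : Integrable (fun s : Fin n → ℝ => ∏ j, Real.exp (-((ε * ⟪γ j, ξ⟫) * s j)))
        (volume.restrict (Set.Ici (0 : Fin n → ℝ))) := auxPiIntegrable _ ha
    have hg : Integrable (fun x : EuclideanSpace ℝ (Fin k) => ‖ψ x‖) volume :=
      ψ.integrable.norm
    refine (hf.mul_prod hg).mono' hcont.aestronglyMeasurable ?_
    filter_upwards with p
    have : ‖F p‖ = (∏ j, Real.exp (-((ε * ⟪γ j, ξ⟫) * p.1 j))) * ‖ψ p.2‖ := by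
      simp only [F, norm_mul, norm_prod, Complex.norm_exp]
      have h1 : (-Complex.I * ((⟪p.2, c⟫ : ℝ) : ℂ)).re = 0 := by
        simp [Complex.mul_re]
      have h2 : ∀ j, (-(b p.2 j * (p.1 j : ℂ))).re = -((ε * ⟪γ j, ξ⟫) * p.1 j) := by
        intro j
        rw [Complex.neg_re, Complex.mul_re, Complex.ofReal_re, Complex.ofReal_im,
          mul_zero, sub_zero, hbre]
      rw [h1, Real.exp_zero]
      simp_rw [h2]
      ring
    rw [this]
  -- the s-integral for fixed x
  have key2 : ∀ x : EuclideanSpace ℝ (Fin k),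
      (∫ s in Set.Ici (0 : Fin n → ℝ), F (s, x)) =
        Complex.exp (-Complex.I * (⟪x, c⟫ : ℂ)) * ψ x *
          ∏ j, (Complex.I * (⟪γ j, x⟫ : ℂ) + ((ε * ⟪γ j, ξ⟫ : ℝ) : ℂ))⁻¹ := by
    intro x
    have : (∫ s in Set.Ici (0 : Fin n → ℝ), F (s, x)) =
        Complex.exp (-Complex.I * (⟪x, c⟫ : ℂ)) * ψ x *
          ∫ s in Set.Ici (0 : Fin n → ℝ), ∏ j, Complex.exp (-(b x j * s j)) := by
      rw [← integral_const_mul]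
    rw [this, auxPiInt (b x) (fun j => by rw [hbre]; exact ha j)]
  -- rewriting the left-hand integrand
  have hfun1 : ∀ s : Fin n → ℝ,
      (∫ x : EuclideanSpace ℝ (Fin k),
          Complex.exp (-Complex.I * (⟪x, c + ∑ j, s j • γ j⟫ : ℂ)) * ψ x) *
        ∏ j, Complex.exp (-(((ε * s j * ⟪γ j, ξ⟫) : ℝ) : ℂ)) = ∫ x, F (s, x) := by
    intro s
    rw [← integral_mul_const]
    exact integral_congr_ae (Filter.Eventually.of_forall fun x => key1 s x)
  refine ⟨?_, ?_, ?_⟩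
  · simp only [hfun1]
    exact hF.integral_prod_left
  · simp only [← key2]
    exact hF.integral_prod_right
  · simp only [hfun1]
    rw [MeasureTheory.integral_integral_swap (f := fun s x => F (s, x)) hF]
    simp only [key2]
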